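/- Let μ be a C₀-nice measure on ℂ, let δ > 0, and let K_δ(z) = z̄ / max(δ,|z|)². Then for every f ∈ L²(μ) and every z ∈ ℂ, the integral ∫_ℂ K_δ(z−ξ) f(ξ) dμ(ξ) converges absolutely and its absolute value is at most (3C₀/δ)^{1/2} ‖f‖_{L²(μ)}. -/

import Mathlib

open MeasureTheory Metric Complex ENNReal NNReal

private lemma rcb_key (μ : Measure ℂ) (C₀ δ : ℝ) (hC₀ : 0 < C₀) (hδ : 0 < δ)
    (hnice : ∀ (z : ℂ) (r : ℝ), 0 < r → μ (ball z r) ≤ ENNReal.ofReal (C₀ * r)) (z : ℂ) :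
    ∫⁻ ξ, ENNReal.ofReal ((max δ ‖z - ξ‖)⁻¹ ^ 2) ∂μ ≤ ENNReal.ofReal (2 * C₀ / δ) := by
  set F : ℂ → ℝ := fun ξ => (max δ ‖z - ξ‖)⁻¹ ^ 2 with hF
  have hm : ∀ w : ℂ, 0 < max δ ‖w‖ := fun w => lt_of_lt_of_le hδ (le_max_left _ _)
  have hFc : Continuous F := by
    apply Continuous.pow
    apply Continuous.inv₀
    · exact continuous_const.max ((continuous_const.sub continuous_id).norm)
    · exact fun ξ => (hm _).ne'
  rw [lintegral_eq_lintegral_meas_lt μ (Filter.Eventually.of_forall fun ξ => by positivity)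
    hFc.aemeasurable]
  have hset : ∀ t : ℝ, 0 < t → {ξ : ℂ | t < F ξ} ⊆ ball z (Real.sqrt (1/t)) := by
    intro t ht ξ hξ
    simp only [Set.mem_setOf_eq, hF] at hξ
    have h1 : max δ ‖z - ξ‖ < Real.sqrt (1/t) := by
      rw [Real.lt_sqrt (hm _).le]
      rw [inv_pow] at hξ
      have := (lt_inv_comm₀ ht (by positivity)).1 hξ
      rwa [one_div]
    rw [mem_ball, dist_comm, dist_eq_norm]
    calc ‖z - ξ‖ ≤ max δ ‖z - ξ‖ := le_max_right _ _
      _ < _ := h1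
  have hempty : ∀ t : ℝ, (δ ^ 2)⁻¹ ≤ t → {ξ : ℂ | t < F ξ} = ∅ := by
    intro t ht
    ext ξ
    simp only [Set.mem_setOf_eq, Set.mem_empty_iff_false, iff_false, not_lt, hF, inv_pow]
    calc ((max δ ‖z - ξ‖) ^ 2)⁻¹ ≤ (δ ^ 2)⁻¹ :=
          inv_anti₀ (by positivity) (pow_le_pow_left₀ hδ.le (le_max_left _ _) 2)
      _ ≤ t := ht
  calc ∫⁻ t in Set.Ioi 0, μ {ξ : ℂ | t < F ξ}
      ≤ ∫⁻ t in Set.Ioi 0, (Set.Ioc (0:ℝ) (δ^2)⁻¹).indicator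
          (fun t => ENNReal.ofReal (C₀ * Real.sqrt (1/t))) t := by
        apply setLIntegral_mono' measurableSet_Ioi
        intro t ht
        rw [Set.mem_Ioi] at ht
        rcases le_or_gt ((δ^2)⁻¹) t with h | h
        · rw [hempty t h]
          simp
        · rw [Set.indicator_of_mem (Set.mem_Ioc.mpr ⟨ht, h.le⟩)]
          calc μ {ξ : ℂ | t < F ξ} ≤ μ (ball z (Real.sqrt (1/t))) :=
                measure_mono (hset t ht)
            _ ≤ _ := hnice z _ (Real.sqrt_pos.2 (by positivity))
    _ = ∫⁻ t in Set.Ioc (0:ℝ) (δ^2)⁻¹, ENNReal.ofReal (C₀ * Real.sqrt (1/t)) := by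
        rw [lintegral_indicator measurableSet_Ioc,
          Measure.restrict_restrict measurableSet_Ioc]
        congr 1
        rw [Set.Ioc_inter_Ioi]
        simp
    _ ≤ ENNReal.ofReal (2 * C₀ / δ) := by
        have ha : (0:ℝ) < (δ^2)⁻¹ := by positivity
        have hcong : ∀ t ∈ Set.Ioc (0:ℝ) (δ^2)⁻¹,
            C₀ * Real.sqrt (1/t) = C₀ * t ^ (-(1/2) : ℝ) := by
          intro t ht
          congr 1
          rw [Real.sqrt_eq_rpow, one_div, Real.inv_rpow ht.1.le, ← Real.rpow_neg ht.1.le]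
        have hieq : IntegrableOn (fun t : ℝ => C₀ * t ^ (-(1/2):ℝ)) (Set.Ioc 0 (δ^2)⁻¹)
            volume :=
          ((intervalIntegral.intervalIntegrable_rpow' (by norm_num)).const_mul C₀).1
        have hi : IntegrableOn (fun t : ℝ => C₀ * Real.sqrt (1/t)) (Set.Ioc 0 (δ^2)⁻¹)
            volume :=
          hieq.congr_fun (fun t ht => (hcong t ht).symm) measurableSet_Ioc
        rw [← ofReal_integral_eq_lintegral_ofReal hi
          (Filter.Eventually.of_forall fun t => by positivity)]
        apply ENNReal.ofReal_le_ofReal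
        rw [setIntegral_congr_fun measurableSet_Ioc hcong]
        rw [← intervalIntegral.integral_of_le ha.le, intervalIntegral.integral_const_mul,
          integral_rpow (Or.inl (by norm_num))]
        have h0 : (0:ℝ) ^ (-(1/2:ℝ) + 1) = 0 := by
          rw [Real.zero_rpow (by norm_num)]
        have hb : ((δ^2)⁻¹ : ℝ) ^ (-(1/2:ℝ) + 1) = δ⁻¹ := by
          rw [show (-(1/2:ℝ) + 1) = (1/2:ℝ) by norm_num, Real.inv_rpow (by positivity),
            ← Real.rpow_natCast δ 2, ← Real.rpow_mul hδ.le]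
          norm_num
        rw [h0, hb, show (-(1/2:ℝ)+1) = 1/2 by norm_num, sub_zero]
        apply le_of_eq
        field_simp

theorem regularized_cauchy_bounded (μ : Measure ℂ) (C₀ δ : ℝ) (hC₀ : 0 < C₀) (hδ : 0 < δ)
    (hnice : ∀ (z : ℂ) (r : ℝ), 0 < r → μ (ball z r) ≤ ENNReal.ofReal (C₀ * r))
    (Kδ : ℂ → ℂ) (hK : ∀ z : ℂ, Kδ z = (starRingEnd ℂ) z / (max δ ‖z‖ : ℝ) ^ 2)
    (f : ℂ → ℂ) (hf : MemLp f 2 μ) (z : ℂ) :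
    Integrable (fun ξ => Kδ (z - ξ) * f ξ) μ ∧
      ‖∫ ξ, Kδ (z - ξ) * f ξ ∂μ‖ ≤
        Real.sqrt (3 * C₀ / δ) * (eLpNorm f 2 μ).toReal := by
  have hm : ∀ w : ℂ, 0 < max δ ‖w‖ := fun w => lt_of_lt_of_le hδ (le_max_left _ _)
  -- continuity of Kδ
  have hKcont : Continuous Kδ := by
    have : Kδ = fun w => (starRingEnd ℂ) w / ((max δ ‖w‖ : ℝ) : ℂ) ^ 2 := funext hK
    rw [this]
    apply Continuous.div
    · exact Complex.continuous_conj
    · exact ((Complex.continuous_ofReal.comp (continuous_const.max continuous_norm)).pow 2)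
    · intro w
      exact pow_ne_zero _ (Complex.ofReal_ne_zero.2 (hm w).ne')
  -- pointwise bound
  have hnorm : ∀ w : ℂ, ‖Kδ w‖ ≤ (max δ ‖w‖)⁻¹ := by
    intro w
    rw [hK, norm_div, norm_pow, RCLike.norm_conj, Complex.norm_real,
      Real.norm_of_nonneg (hm w).le]
    rw [div_le_iff₀ (by positivity)]
    calc ‖w‖ ≤ max δ ‖w‖ := le_max_right _ _
      _ ≤ (max δ ‖w‖)⁻¹ * max δ ‖w‖ ^ 2 := by
          rw [pow_two, ← mul_assoc, inv_mul_cancel₀ (hm w).ne', one_mul]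
  set Kz : ℂ → ℂ := fun ξ => Kδ (z - ξ) with hKz
  have hKzc : Continuous Kz := hKcont.comp (continuous_const.sub continuous_id)
  -- L² bound for Kz
  have hK2 : ∫⁻ ξ, (‖Kz ξ‖₊ : ℝ≥0∞) ^ (2:ℝ) ∂μ ≤ ENNReal.ofReal (2 * C₀ / δ) := by
    refine le_trans (lintegral_mono fun ξ => ?_) (rcb_key μ C₀ δ hC₀ hδ hnice z)
    rw [← enorm_eq_nnnorm, ← ofReal_norm,
      ENNReal.ofReal_rpow_of_nonneg (norm_nonneg _) (by norm_num)]
    apply ENNReal.ofReal_le_ofReal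
    rw [show (2:ℝ) = ((2:ℕ):ℝ) by norm_num, Real.rpow_natCast]
    exact pow_le_pow_left₀ (norm_nonneg _) (hnorm _) 2
  have hfin : ENNReal.ofReal (2 * C₀ / δ) ^ (1/2 : ℝ) ≠ ⊤ :=
    (ENNReal.rpow_lt_top_of_nonneg (by norm_num) ENNReal.ofReal_ne_top).ne
  -- Hölder
  have h22 : (2:ℝ).HolderConjugate 2 := Real.HolderConjugate.two_two
  have hfnn : AEMeasurable (fun ξ => (‖f ξ‖₊ : ℝ≥0∞)) μ := hf.1.enorm
  have hKnn : AEMeasurable (fun ξ => (‖Kz ξ‖₊ : ℝ≥0∞)) μ :=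
    hKzc.aestronglyMeasurable.enorm
  have hfsnorm : eLpNorm f 2 μ = (∫⁻ ξ, (‖f ξ‖₊ : ℝ≥0∞) ^ (2:ℝ) ∂μ) ^ (1/2 : ℝ) := by
    rw [eLpNorm_eq_lintegral_rpow_enorm_toReal (by norm_num) (by norm_num)]
    norm_num [enorm_eq_nnnorm]
  have hHolder : ∫⁻ ξ, (‖Kz ξ * f ξ‖₊ : ℝ≥0∞) ∂μ ≤
      ENNReal.ofReal (2 * C₀ / δ) ^ (1/2 : ℝ) * eLpNorm f 2 μ := by
    calc ∫⁻ ξ, (‖Kz ξ * f ξ‖₊ : ℝ≥0∞) ∂μ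
        = ∫⁻ ξ, ((fun ξ => (‖Kz ξ‖₊ : ℝ≥0∞)) * fun ξ => (‖f ξ‖₊ : ℝ≥0∞)) ξ ∂μ := by
          simp [nnnorm_mul]
      _ ≤ (∫⁻ ξ, (‖Kz ξ‖₊ : ℝ≥0∞) ^ (2:ℝ) ∂μ) ^ (1/2:ℝ) *
          (∫⁻ ξ, (‖f ξ‖₊ : ℝ≥0∞) ^ (2:ℝ) ∂μ) ^ (1/2:ℝ) :=
          ENNReal.lintegral_mul_le_Lp_mul_Lq μ h22 hKnn hfnn
      _ ≤ ENNReal.ofReal (2 * C₀ / δ) ^ (1/2 : ℝ) * eLpNorm f 2 μ := by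
          rw [hfsnorm]
          exact mul_le_mul_left (ENNReal.rpow_le_rpow hK2 (by norm_num)) _
  have hfne : eLpNorm f 2 μ ≠ ⊤ := hf.2.ne
  have hint : Integrable (fun ξ => Kz ξ * f ξ) μ := by
    refine ⟨(hKzc.aestronglyMeasurable).mul hf.1, ?_⟩
    show (∫⁻ ξ, (‖Kz ξ * f ξ‖₊ : ℝ≥0∞) ∂μ) < ⊤
    exact lt_of_le_of_lt hHolder (ENNReal.mul_lt_top hfin.lt_top hfne.lt_top)
  refine ⟨hint, ?_⟩
  calc ‖∫ ξ, Kz ξ * f ξ ∂μ‖ ≤ (∫⁻ ξ, ENNReal.ofReal ‖Kz ξ * f ξ‖ ∂μ).toReal :=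
        norm_integral_le_lintegral_norm _
    _ ≤ (ENNReal.ofReal (2 * C₀ / δ) ^ (1/2 : ℝ) * eLpNorm f 2 μ).toReal := by
        apply ENNReal.toReal_mono (ENNReal.mul_ne_top hfin hfne)
        simpa only [ofReal_norm, enorm_eq_nnnorm] using hHolder
    _ = (2 * C₀ / δ) ^ (1/2 : ℝ) * (eLpNorm f 2 μ).toReal := by
        rw [ENNReal.toReal_mul, ← ENNReal.toReal_rpow,
          ENNReal.toReal_ofReal (by positivity)]
    _ ≤ Real.sqrt (3 * C₀ / δ) * (eLpNorm f 2 μ).toReal := by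
        apply mul_le_mul_of_nonneg_right _ ENNReal.toReal_nonneg
        rw [← Real.sqrt_eq_rpow]
        apply Real.sqrt_le_sqrt
        gcongr
        linarith
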